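/- Acceleration telescoping lemma: let f : X → ℝ be convex on a convex set Q, let x* minimize f over Q, let α_0 = 1 and α_k ≥ 1 satisfy α_k² ≤ α_k + α_{k-1}² for all k ≥ 1, and let sequences x_k ∈ Q, \bar{x}_0 = x_0, \bar{x}_{k+1} = x_{k+1}/α_k + (1 − 1/α_k)\bar{x}_k, all lying in Q. Define f_k(x) = α_k² f(x/α_k + (1 − 1/α_k)\bar{x}_k). Then α_K² (f(\bar{x}_{K+1}) − f(x*)) ≤ Σ_{k=0}^{K} [f_k(x_{k+1}) − f_k(x*)]. -/

import Mathlib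

open Matrix
open scoped Classical

/-- The positive semidefinite square root of a matrix (zero if not PSD). -/
noncomputable def sqrtM {n : ℕ} (A : Matrix (Fin n) (Fin n) ℝ) : Matrix (Fin n) (Fin n) ℝ :=
  if h : A.PosSemidef then
    (h.1.eigenvectorUnitary : Matrix (Fin n) (Fin n) ℝ) *
      diagonal (fun i => Real.sqrt (h.1.eigenvalues i)) *
      (star h.1.eigenvectorUnitary : Matrix (Fin n) (Fin n) ℝ)
  else 0

/-- Euclidean norm of a vector. -/
noncomputable def euclNorm {n : ℕ} (v : Fin n → ℝ) : ℝ := Real.sqrt (v ⬝ᵥ v)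

/-- The ℓ₂ operator (spectral) norm of a matrix. -/
noncomputable def opNorm {n : ℕ} (A : Matrix (Fin n) (Fin n) ℝ) : ℝ :=
  ⨆ u : {u : Fin n → ℝ // euclNorm u ≤ 1}, euclNorm (A *ᵥ u)

theorem acceleration_telescoping {E : Type*} [AddCommGroup E] [Module ℝ E]
    {Q : Set E} (hQ : Convex ℝ Q) (f : E → ℝ) (hf : ConvexOn ℝ Q f)
    (xstar : E) (hxs : xstar ∈ Q) (hmin : ∀ y ∈ Q, f xstar ≤ f y)
    (α : ℕ → ℝ) (hα0 : α 0 = 1) (hα1 : ∀ k, 1 ≤ α k)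
    (hαrec : ∀ k, 1 ≤ k → α k ^ 2 ≤ α k + α (k - 1) ^ 2)
    (x xb : ℕ → E) (hxQ : ∀ k, x k ∈ Q) (hxbQ : ∀ k, xb k ∈ Q)
    (hxb0 : xb 0 = x 0)
    (hxb : ∀ k, xb (k + 1) = (α k)⁻¹ • x (k + 1) + (1 - (α k)⁻¹) • xb k)
    (K : ℕ) :
    α K ^ 2 * (f (xb (K + 1)) - f xstar)
      ≤ ∑ k ∈ Finset.range (K + 1),
          (α k ^ 2 * f ((α k)⁻¹ • x (k + 1) + (1 - (α k)⁻¹) • xb k)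
            - α k ^ 2 * f ((α k)⁻¹ • xstar + (1 - (α k)⁻¹) • xb k)) := by
  induction K with
  | zero =>
    simp [Finset.sum_range_one, hα0, hxb 0]
  | succ K ih =>
    rw [Finset.sum_range_succ]
    have hk := hα1 (K + 1)
    have hpos : (0 : ℝ) < α (K + 1) := lt_of_lt_of_le one_pos hk
    have ht0 : (0 : ℝ) ≤ (α (K + 1))⁻¹ := by positivity
    have ht1 : (α (K + 1))⁻¹ ≤ 1 := by
      rw [inv_le_one_iff₀]; right; exact hk
    have hconv : f ((α (K + 1))⁻¹ • xstar + (1 - (α (K + 1))⁻¹) • xb (K + 1))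
        ≤ (α (K + 1))⁻¹ * f xstar + (1 - (α (K + 1))⁻¹) * f (xb (K + 1)) := by
      simpa [smul_eq_mul] using hf.2 hxs (hxbQ (K + 1)) ht0
        (by linarith : (0:ℝ) ≤ 1 - (α (K + 1))⁻¹) (by ring)
    have hrec : α (K + 1) ^ 2 ≤ α (K + 1) + α K ^ 2 := by
      have := hαrec (K + 1) (by omega)
      simpa using this
    have hge : 0 ≤ f (xb (K + 1)) - f xstar := sub_nonneg.2 (hmin _ (hxbQ _))
    rw [← hxb (K + 1)]
    have key : (α (K + 1)) ^ 2 * ((α (K + 1))⁻¹ * f xstar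
          + (1 - (α (K + 1))⁻¹) * f (xb (K + 1)))
        = α (K + 1) * f xstar + (α (K + 1) ^ 2 - α (K + 1)) * f (xb (K + 1)) := by
      field_simp
    have hconv2 : (α (K + 1)) ^ 2
          * f ((α (K + 1))⁻¹ • xstar + (1 - (α (K + 1))⁻¹) • xb (K + 1))
        ≤ α (K + 1) * f xstar + (α (K + 1) ^ 2 - α (K + 1)) * f (xb (K + 1)) := by
      calc _ ≤ (α (K + 1)) ^ 2 * ((α (K + 1))⁻¹ * f xstar
          + (1 - (α (K + 1))⁻¹) * f (xb (K + 1))) :=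
            mul_le_mul_of_nonneg_left hconv (sq_nonneg _)
        _ = _ := key
    have hrec' : α (K + 1) ^ 2 - α (K + 1) ≤ α K ^ 2 := by linarith
    have hmul := mul_le_mul_of_nonneg_right hrec' hge
    linarith [ih]
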